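/- Let μ > 0, β > 0, c ∈ ℝ, w ∈ ℝⁿ, and let φ_1, …, φ_m : ℝⁿ → ℝ be convex and continuous. Define ℘₁(z) := −μ·log(−z) for z < 0, and ℘₂(z) := −μ·log(−z) if z ≤ −e^{−c/μ} and ℘₂(z) := μ·e^{c/μ}·z + μ + c otherwise. Let ψ̃(y) := ∑_{i=1}^m ℘₂(φ_i(y)) + (β/2)‖y − w‖² (defined on all of ℝⁿ) and ψ(y) := ∑_{i=1}^m ℘₁(φ_i(y)) + (β/2)‖y − w‖² (defined on the open set {y : φ_i(y) < 0 for all i}). For each i let τ_i := inf_{y ∈ ℝⁿ} [ ∑_{j≠i} ℘₂(φ_j(y)) + (β/2)‖y − w‖² ]. Suppose there exists y₀ with φ_i(y₀) < 0 for all i such that c ≥ ψ(y₀) − τ_i for every i. Then every minimizer ỹ of ψ̃ over ℝⁿ satisfies φ_i(ỹ) ≤ −e^{−c/μ} for all i, and ỹ is also a minimizer of ψ over {y : φ_i(y) < 0 for all i}; in particular the minimizers of ψ̃ and of ψ coincide. -/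

import Mathlib

/-- Prop: equivalence of the y-subproblems with the standard and
extended log barriers: if `c` is large enough (encoded via the point `y₀` and
the inequalities `hc` expressing `c ≥ ψ(y₀) − τᵢ`), every minimizer of the
extended-barrier objective `ψ̃` satisfies `φᵢ(ỹ) ≤ -e^{-c/μ}` and minimizes the
standard-barrier objective `ψ` on `{y : ∀ i, φᵢ(y) < 0}`; moreover the
minimizers of `ψ̃` and `ψ` coincide. -/
theorem stmt18 {n m : ℕ} (μ β c : ℝ) (hμ : 0 < μ) (hβ : 0 < β)
    (w : EuclideanSpace ℝ (Fin n))
    (φ : Fin m → EuclideanSpace ℝ (Fin n) → ℝ)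
    (hconv : ∀ i, ConvexOn ℝ Set.univ (φ i))
    (hcont : ∀ i, Continuous (φ i))
    (p2 : ℝ → ℝ)
    (hp2 : p2 = fun z => if z ≤ -Real.exp (-c/μ) then -μ * Real.log (-z)
      else μ * Real.exp (c/μ) * z + μ + c)
    (ψt ψ : EuclideanSpace ℝ (Fin n) → ℝ)
    (hψt : ψt = fun y => (∑ i, p2 (φ i y)) + (β/2) * ‖y - w‖^2)
    (hψ : ψ = fun y => (∑ i, -μ * Real.log (-(φ i y))) + (β/2) * ‖y - w‖^2)
    (y0 : EuclideanSpace ℝ (Fin n)) (hy0 : ∀ i, φ i y0 < 0)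
    (hc : ∀ i : Fin m, ∀ y : EuclideanSpace ℝ (Fin n),
      ψ y0 - c ≤ (∑ j ∈ Finset.univ.erase i, p2 (φ j y)) + (β/2) * ‖y - w‖^2) :
    (∀ yt, (∀ y, ψt yt ≤ ψt y) →
      (∀ i, φ i yt ≤ -Real.exp (-c/μ)) ∧
      (∀ y, (∀ i, φ i y < 0) → ψ yt ≤ ψ y)) ∧
    {y | ∀ z, ψt y ≤ ψt z}
      = {y | (∀ i, φ i y < 0) ∧ ∀ z, (∀ i, φ i z < 0) → ψ y ≤ ψ z} := by
  have hE : (0:ℝ) < Real.exp (c/μ) := Real.exp_pos _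
  have hEE : Real.exp (c/μ) * Real.exp (-c/μ) = 1 := by
    rw [← Real.exp_add, show c/μ + -c/μ = 0 by ring, Real.exp_zero]
  have hz₀neg : -Real.exp (-c/μ) < 0 := neg_neg_iff_pos.mpr (Real.exp_pos _)
  -- key inequality: the tangent line lies below the log barrier
  have hkey : ∀ z : ℝ, z < 0 → μ * Real.exp (c/μ) * z + μ + c ≤ -μ * Real.log (-z) := by
    intro z hz
    have h := Real.add_one_le_exp (Real.log (-z) + c/μ)
    rw [Real.exp_add, Real.exp_log (by linarith : (0:ℝ) < -z)] at h
    have h2 := mul_le_mul_of_nonneg_left h hμ.le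
    have hc' : μ * (c/μ) = c := by field_simp
    nlinarith [h2]
  have hlow2 : ∀ z : ℝ, μ * Real.exp (c/μ) * z + μ + c ≤ p2 z := by
    intro z; rw [hp2]; dsimp only
    split_ifs with h
    · exact hkey z (lt_of_le_of_lt h hz₀neg)
    · exact le_refl _
  have hub : ∀ z : ℝ, z < 0 → p2 z ≤ -μ * Real.log (-z) := by
    intro z hz; rw [hp2]; dsimp only
    split_ifs with h
    · exact le_refl _
    · exact hkey z hz
  have hgt : ∀ z : ℝ, -Real.exp (-c/μ) < z → c < p2 z := by
    intro z h; rw [hp2]; dsimp only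
    rw [if_neg (not_le.mpr h)]
    have h1 : 0 < μ * Real.exp (c/μ) * (z + Real.exp (-c/μ)) :=
      mul_pos (mul_pos hμ hE) (by linarith)
    have h2 : μ * (Real.exp (c/μ) * Real.exp (-c/μ)) = μ := by rw [hEE, mul_one]
    nlinarith [h1, h2]
  have heq : ∀ z : ℝ, z ≤ -Real.exp (-c/μ) → p2 z = -μ * Real.log (-z) := by
    intro z h; rw [hp2]; exact if_pos h
  -- ψt ≤ ψ on the feasible set
  have hψt_le_ψ : ∀ y, (∀ i, φ i y < 0) → ψt y ≤ ψt y ∧ ψt y ≤ ψ y := by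
    intro y hy
    refine ⟨le_refl _, ?_⟩
    rw [hψt, hψ]; dsimp only
    exact add_le_add_left (Finset.sum_le_sum fun i _ => hub _ (hy i)) _
  -- continuity of p2 and ψt
  have hp2cont : Continuous p2 := by
    have h1 : p2 = fun z => if z ≤ -Real.exp (-c/μ) then
        -μ * Real.log (-(min z (-Real.exp (-c/μ)))) else μ * Real.exp (c/μ) * z + μ + c := by
      rw [hp2]; funext z
      split_ifs with h
      · rw [min_eq_left h]
      · rfl
    rw [h1]
    apply Continuous.if_le
    · exact continuous_const.mul (Continuous.log
        (continuous_id.min continuous_const).neg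
        (fun z => by
          have h2 : min z (-Real.exp (-c/μ)) ≤ -Real.exp (-c/μ) := min_le_right _ _
          intro hcontra
          nlinarith [Real.exp_pos (-c/μ)]))
    · exact ((continuous_const.mul continuous_id).add continuous_const).add continuous_const
    · exact continuous_id
    · exact continuous_const
    · intro z hz
      rw [show z = -Real.exp (-c/μ) from hz, min_self]
      rw [neg_neg, Real.log_exp]
      have : -μ * (-c/μ) = c := by field_simp
      rw [this]
      nlinarith [hEE]
  have hψtcont : Continuous ψt := by
    rw [hψt]
    exact (continuous_finset_sum _ fun i _ => hp2cont.comp (hcont i)).add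
      (continuous_const.mul ((continuous_id.sub continuous_const).norm.pow 2))
  -- affine-type lower bound for each convex φ i
  have hCs : ∀ i, ∃ C : ℝ, 0 ≤ C ∧ ∀ y, -C * (1 + ‖y - y0‖) ≤ φ i y := by
    intro i
    obtain ⟨M, hM⟩ := (isCompact_closedBall y0 1).exists_bound_of_continuousOn
      (hcont i).continuousOn
    have hy0b : y0 ∈ Metric.closedBall y0 1 := Metric.mem_closedBall_self zero_le_one
    have hM0 : 0 ≤ M := le_trans (norm_nonneg _) (hM y0 hy0b)
    refine ⟨2*M, by linarith, fun y => ?_⟩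
    have ht0 : (0:ℝ) ≤ ‖y - y0‖ := norm_nonneg _
    by_cases hts : ‖y - y0‖ ≤ 1
    · have hyball : y ∈ Metric.closedBall y0 1 := by
        rwa [Metric.mem_closedBall, dist_eq_norm]
      have h3 := hM y hyball
      rw [Real.norm_eq_abs, abs_le] at h3
      nlinarith [h3.1]
    · push_neg at hts
      set t : ℝ := ‖y - y0‖ with htdef
      have ht0' : (0:ℝ) < t := lt_trans one_pos hts
      have hit : t * t⁻¹ = 1 := mul_inv_cancel₀ (ne_of_gt ht0')
      have hinv0 : (0:ℝ) ≤ t⁻¹ := inv_nonneg.mpr ht0'.le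
      have hinv1 : t⁻¹ ≤ 1 := by nlinarith
      set u := y0 + t⁻¹ • (y - y0) with hudef
      have hu : u ∈ Metric.closedBall y0 1 := by
        rw [Metric.mem_closedBall, dist_eq_norm]
        have h4 : u - y0 = t⁻¹ • (y - y0) := by rw [hudef]; abel
        rw [h4, norm_smul, Real.norm_eq_abs, abs_of_nonneg hinv0, ← htdef,
          inv_mul_cancel₀ (ne_of_gt ht0')]
      have hcomb : (1 - t⁻¹) • y0 + t⁻¹ • y = u := by
        rw [hudef, sub_smul, one_smul, smul_sub]; abel
      have hineq := (hconv i).2 (Set.mem_univ y0) (Set.mem_univ y)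
        (by linarith : (0:ℝ) ≤ 1 - t⁻¹) hinv0 (by ring)
      rw [hcomb] at hineq
      simp only [smul_eq_mul] at hineq
      have hu' : -M ≤ φ i u := by
        have h5 := hM u hu; rw [Real.norm_eq_abs, abs_le] at h5; exact h5.1
      have hy0' : φ i y0 ≤ M := by
        have h5 := hM y0 hy0b; rw [Real.norm_eq_abs, abs_le] at h5; exact h5.2
      have hstep : t * φ i u ≤ (t - 1) * φ i y0 + φ i y := by
        have h2 := mul_le_mul_of_nonneg_left hineq ht0'.le
        have h6 : t * ((1 - t⁻¹) * φ i y0 + t⁻¹ * φ i y)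
            = (t - t * t⁻¹) * φ i y0 + (t * t⁻¹) * φ i y := by ring
        rw [h6, hit] at h2
        linarith [h2]
      have e1 : t * (-M) ≤ t * φ i u := mul_le_mul_of_nonneg_left hu' ht0'.le
      have e2 : (t - 1) * φ i y0 ≤ (t - 1) * M :=
        mul_le_mul_of_nonneg_left hy0' (by linarith)
      nlinarith [e1, e2, hstep, hM0, ht0'.le]
  choose C hC0 hClow using hCs
  -- global lower bound for ψt
  have hSC0 : 0 ≤ ∑ i, C i := Finset.sum_nonneg fun i _ => hC0 i
  set K : ℝ := μ * Real.exp (c/μ) * (∑ i, C i) with hKdef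
  have hK0 : 0 ≤ K := by positivity
  have hlb : ∀ y, (m:ℝ)*(μ+c) - K * (1 + ‖y - y0‖) + (β/2) * ‖y - w‖^2 ≤ ψt y := by
    intro y
    rw [hψt]; dsimp only
    have h1 : ∀ i ∈ Finset.univ,
        μ * Real.exp (c/μ) * (-C i * (1 + ‖y - y0‖)) + (μ + c) ≤ p2 (φ i y) := by
      intro i _
      have h2 : μ * Real.exp (c/μ) * (-C i * (1 + ‖y - y0‖)) ≤ μ * Real.exp (c/μ) * φ i y :=
        mul_le_mul_of_nonneg_left (hClow i y) (by positivity)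
      linarith [hlow2 (φ i y)]
    have hsum := Finset.sum_le_sum h1
    have heqsum : ∑ i : Fin m, (μ * Real.exp (c/μ) * (-C i * (1 + ‖y - y0‖)) + (μ + c))
        = (m:ℝ)*(μ+c) - K * (1 + ‖y - y0‖) := by
      rw [Finset.sum_add_distrib, Finset.sum_const, Finset.card_univ, Fintype.card_fin,
        nsmul_eq_mul, hKdef]
      have h3 : ∀ i : Fin m, μ * Real.exp (c/μ) * (-C i * (1 + ‖y - y0‖))
          = (-(μ * Real.exp (c/μ) * (1 + ‖y - y0‖))) * C i := fun i => by ring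
      rw [Finset.sum_congr rfl (fun i _ => h3 i), ← Finset.mul_sum]
      ring
    rw [heqsum] at hsum
    linarith [hsum]
  -- existence of a global minimizer of ψt via coercivity
  have hex : ∃ yt, ∀ y, ψt yt ≤ ψt y := by
    apply hψtcont.exists_forall_le' y0
    set g : ℝ → ℝ := fun r => (m:ℝ)*(μ+c) - K*(1 + r + ‖y0‖) + (β/2)*(r - ‖w‖)^2 with hgdef
    have hg : Filter.Tendsto g Filter.atTop Filter.atTop := by
      have h1 : Filter.Tendsto (fun r : ℝ => r * ((β/2)*r - (β*‖w‖ + K)))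
          Filter.atTop Filter.atTop := by
        apply Filter.Tendsto.atTop_mul_atTop₀ Filter.tendsto_id
        apply Filter.tendsto_atTop_add_const_right
        exact Filter.Tendsto.const_mul_atTop (by positivity) Filter.tendsto_id
      have h2 : g = fun r => r * ((β/2)*r - (β*‖w‖ + K))
          + ((m:ℝ)*(μ+c) - K*(1 + ‖y0‖) + (β/2)*‖w‖^2) := by
        funext r; rw [hgdef]; ring
      rw [h2]
      exact Filter.tendsto_atTop_add_const_right _ _ h1
    have h2 := (hg.comp (tendsto_norm_cocompact_atTop (E := EuclideanSpace ℝ (Fin n)))).eventually_ge_atTop (ψt y0)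
    have h3 := (tendsto_norm_cocompact_atTop (E := EuclideanSpace ℝ (Fin n))).eventually_ge_atTop ‖w‖
    filter_upwards [h2, h3] with y hy1 hy2
    refine le_trans hy1 (le_trans ?_ (hlb y))
    have e1 : ‖y - y0‖ ≤ ‖y‖ + ‖y0‖ := norm_sub_le _ _
    have e2 : ‖y‖ - ‖w‖ ≤ ‖y - w‖ := norm_sub_norm_le _ _
    have e3 : (‖y‖ - ‖w‖)^2 ≤ ‖y - w‖^2 := pow_le_pow_left₀ (by linarith) e2 2
    have e4 : K * (1 + ‖y - y0‖) ≤ K * (1 + (‖y‖ + ‖y0‖)) :=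
      mul_le_mul_of_nonneg_left (by linarith) hK0
    simp only [Function.comp, hgdef]
    nlinarith [e3, e4, hβ.le]
  -- main claim for any minimizer of ψt
  have hψteqψ : ∀ v, (∀ i, φ i v ≤ -Real.exp (-c/μ)) → ψ v = ψt v := by
    intro v hv
    rw [hψ, hψt]; dsimp only
    congr 1
    exact Finset.sum_congr rfl fun j _ => (heq _ (hv j)).symm
  have hmain : ∀ yt, (∀ y, ψt yt ≤ ψt y) →
      (∀ i, φ i yt ≤ -Real.exp (-c/μ)) ∧
      (∀ y, (∀ i, φ i y < 0) → ψ yt ≤ ψ y) := by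
    intro yt hmin
    have hb : ∀ i, φ i yt ≤ -Real.exp (-c/μ) := by
      intro i
      by_contra hgt'
      push_neg at hgt'
      have h1 : ψt yt ≤ ψ y0 := (hmin y0).trans (hψt_le_ψ y0 hy0).2
      have h2 : c < p2 (φ i yt) := hgt (φ i yt) hgt'
      have h3 := hc i yt
      have h4 : ψt yt = p2 (φ i yt)
          + ((∑ j ∈ Finset.univ.erase i, p2 (φ j yt)) + (β/2)*‖yt - w‖^2) := by
        rw [hψt]; dsimp only
        rw [← Finset.add_sum_erase _ _ (Finset.mem_univ i)]
        ring
      linarith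
    refine ⟨hb, fun y hyfeas => ?_⟩
    rw [hψteqψ yt hb]
    exact (hmin y).trans (hψt_le_ψ y hyfeas).2
  refine ⟨hmain, ?_⟩
  obtain ⟨yt, hyt⟩ := hex
  have h1 := hmain yt hyt
  have hytfeas : ∀ i, φ i yt < 0 := fun i => lt_of_le_of_lt (h1.1 i) hz₀neg
  ext y
  simp only [Set.mem_setOf_eq]
  constructor
  · intro hmin
    exact ⟨fun i => lt_of_le_of_lt ((hmain y hmin).1 i) hz₀neg, (hmain y hmin).2⟩
  · rintro ⟨hfeas, hminψ⟩ z
    calc ψt y ≤ ψ y := (hψt_le_ψ y hfeas).2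
      _ ≤ ψ yt := hminψ yt hytfeas
      _ = ψt yt := hψteqψ yt h1.1
      _ ≤ ψt z := hyt z
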